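/- Let G = (G₀ G₁) be a real k×n matrix of rank k (columns partitioned so that G₀ is an invertible k×k matrix). Then the integer span of the columns of G is a discrete additive subgroup of ℝ^k if and only if there exist a nonzero integer β and an integer k×(n−k) matrix X with G₀⁻¹G₁ = (1/β)X. -/

import Mathlib

open Matrix BigOperators

/-- Λ(G) for G = (G₀ G₁) with G₀ invertible is discrete iff
G₀⁻¹G₁ = (1/β)X for a nonzero integer β and an integer matrix X. -/
theorem stmt1 (k m : ℕ) (G₀ : Matrix (Fin k) (Fin k) ℝ)
    (G₁ : Matrix (Fin k) (Fin m) ℝ) (hG₀ : IsUnit G₀.det) :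
    (∃ ε > (0 : ℝ), ∀ (c : Fin k → ℤ) (d : Fin m → ℤ),
        G₀.mulVec (fun i => (c i : ℝ)) + G₁.mulVec (fun i => (d i : ℝ)) ≠ 0 →
        ε ≤ ∑ i, (G₀.mulVec (fun i => (c i : ℝ)) + G₁.mulVec (fun i => (d i : ℝ))) i ^ 2)
      ↔ ∃ (β : ℤ) (X : Matrix (Fin k) (Fin m) ℤ), β ≠ 0 ∧
          G₀⁻¹ * G₁ = ((β : ℝ))⁻¹ • X.map (Int.cast : ℤ → ℝ) := by
  set A : Matrix (Fin k) (Fin m) ℝ := G₀⁻¹ * G₁ with hA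
  have hinv : G₀ * A = G₁ := by
    rw [hA, ← Matrix.mul_assoc, Matrix.mul_nonsing_inv _ hG₀, Matrix.one_mul]
  constructor
  · rintro ⟨ε, hε, hlat⟩
    set C : ℝ := (∑ i, ∑ j, (G₀ i j) ^ 2) + 1 with hC
    have hCpos : (0 : ℝ) < C := by positivity
    have hδ0 : (0 : ℝ) < ε / (C * (k + 1)) := by positivity
    set δ : ℝ := Real.sqrt (ε / (C * (k + 1))) with hδ
    have hδpos : 0 < δ := Real.sqrt_pos.mpr hδ0
    have hδsq : δ ^ 2 = ε / (C * (k + 1)) := Real.sq_sqrt hδ0.le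
    -- pigeonhole on the grid of fractional parts
    have hmaps : Set.MapsTo
        (fun N : ℕ => fun (j : Fin m) (i : Fin k) => ⌊Int.fract ((N : ℝ) * A i j) / δ⌋)
        Set.univ (Set.univ.pi fun _ : Fin m => Set.univ.pi fun _ : Fin k =>
          Set.Icc (0 : ℤ) ⌈δ⁻¹⌉) := by
      intro N _
      intro j _
      intro i _
      constructor
      · exact Int.floor_nonneg.mpr (div_nonneg (Int.fract_nonneg _) hδpos.le)
      · have h1 : Int.fract ((N : ℝ) * A i j) / δ ≤ δ⁻¹ := by
          rw [div_le_iff₀ hδpos, inv_mul_cancel₀ hδpos.ne']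
          exact (Int.fract_lt_one _).le
        exact (Int.floor_le_floor h1).trans (Int.floor_le_ceil _)
    have hfin : (Set.univ.pi fun _ : Fin m => Set.univ.pi fun _ : Fin k =>
        Set.Icc (0 : ℤ) ⌈δ⁻¹⌉).Finite :=
      Set.Finite.pi fun _ => Set.Finite.pi fun _ => Set.finite_Icc _ _
    obtain ⟨N₁, -, N₂, -, hNne, hfeq⟩ :=
      Set.infinite_univ.exists_ne_map_eq_of_mapsTo hmaps hfin
    refine ⟨(N₂ : ℤ) - N₁,
      fun i j => ⌊(N₂ : ℝ) * A i j⌋ - ⌊(N₁ : ℝ) * A i j⌋,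
      sub_ne_zero.mpr (fun h => hNne (Nat.cast_injective h).symm), ?_⟩
    -- key claim : for each column j, the small vector u is zero
    have key : ∀ (j : Fin m) (i : Fin k),
        ((N₂ : ℝ) - N₁) * A i j = ((⌊(N₂ : ℝ) * A i j⌋ - ⌊(N₁ : ℝ) * A i j⌋ : ℤ) : ℝ) := by
      intro j
      set u : Fin k → ℝ := fun i =>
        Int.fract ((N₂ : ℝ) * A i j) - Int.fract ((N₁ : ℝ) * A i j) with hu
      have husmall : ∀ i, |u i| < δ := by
        intro i
        have hfl : ⌊Int.fract ((N₁ : ℝ) * A i j) / δ⌋ =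
            ⌊Int.fract ((N₂ : ℝ) * A i j) / δ⌋ := by
          simpa using congrFun (congrFun hfeq j) i
        have h1 : |Int.fract ((N₂ : ℝ) * A i j) / δ -
            Int.fract ((N₁ : ℝ) * A i j) / δ| < 1 :=
          Int.abs_sub_lt_one_of_floor_eq_floor hfl.symm
        rw [div_sub_div_same, abs_div, abs_of_pos hδpos, div_lt_one hδpos] at h1
        exact h1
      -- u is a lattice vector image
      set c : Fin k → ℤ := fun i => ⌊(N₁ : ℝ) * A i j⌋ - ⌊(N₂ : ℝ) * A i j⌋ with hc
      set d : Fin m → ℤ := fun j' => if j' = j then (N₂ : ℤ) - N₁ else 0 with hd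
      have hud : u = (fun i => (c i : ℝ)) + A.mulVec (fun j' => (d j' : ℝ)) := by
        funext i
        have : (A.mulVec (fun j' => (d j' : ℝ))) i = ((N₂ : ℝ) - N₁) * A i j := by
          simp only [Matrix.mulVec, dotProduct, hd]
          rw [Finset.sum_eq_single j]
          · simp only [if_pos rfl]; push_cast; ring
          · intro b _ hb; simp [hb]
          · simp
        rw [Pi.add_apply, this, hu, hc]
        simp only [Int.fract]
        push_cast
        ring
      have hlatvec : G₀.mulVec (fun i => (c i : ℝ)) + G₁.mulVec (fun j' => (d j' : ℝ))
          = G₀.mulVec u := by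
        rw [hud, Matrix.mulVec_add, Matrix.mulVec_mulVec, hinv]
      have huzero : u = 0 := by
        by_contra huz
        have hGu : G₀.mulVec (fun i => (c i : ℝ)) + G₁.mulVec (fun j' => (d j' : ℝ)) ≠ 0 := by
          rw [hlatvec]
          intro h0
          apply huz
          have : u = (G₀⁻¹ * G₀).mulVec u := by
            rw [Matrix.nonsing_inv_mul _ hG₀, Matrix.one_mulVec]
          rw [this, ← Matrix.mulVec_mulVec, h0, Matrix.mulVec_zero]
        have hle := hlat c d hGu
        -- but the sum is smaller than ε
        have hbound : ∑ i, (G₀.mulVec (fun i => (c i : ℝ))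
            + G₁.mulVec (fun j' => (d j' : ℝ))) i ^ 2 < ε := by
          rw [hlatvec]
          have husq : ∑ i, u i ^ 2 ≤ (k : ℝ) * δ ^ 2 := by
            calc ∑ i, u i ^ 2 ≤ ∑ _i : Fin k, δ ^ 2 := by
                  refine Finset.sum_le_sum fun i _ => ?_
                  rw [← sq_abs]
                  exact pow_le_pow_left₀ (abs_nonneg _) (husmall i).le 2
              _ = (k : ℝ) * δ ^ 2 := by simp [mul_comm]
          have hCS : ∀ i, (G₀.mulVec u) i ^ 2 ≤ (∑ j', (G₀ i j') ^ 2) * ∑ j', u j' ^ 2 := by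
            intro i
            simpa [Matrix.mulVec, dotProduct] using
              Finset.sum_mul_sq_le_sq_mul_sq Finset.univ (fun j' => G₀ i j') u
          calc ∑ i, (G₀.mulVec u) i ^ 2
              ≤ ∑ i, (∑ j', (G₀ i j') ^ 2) * ∑ j', u j' ^ 2 :=
                Finset.sum_le_sum fun i _ => hCS i
            _ = (∑ i, ∑ j', (G₀ i j') ^ 2) * ∑ j', u j' ^ 2 := by
                rw [Finset.sum_mul]
            _ ≤ C * ((k : ℝ) * δ ^ 2) := by
                apply mul_le_mul
                · rw [hC]; linarith
                · exact husq
                · positivity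
                · exact hCpos.le
            _ = ε * (k / (k + 1)) := by
                rw [hδsq]; field_simp
            _ < ε := by
                have hk : (k : ℝ) / (k + 1) < 1 := by
                  rw [div_lt_one (by positivity)]; linarith
                calc ε * ((k : ℝ) / (k + 1)) < ε * 1 := by
                      exact mul_lt_mul_of_pos_left hk hε
                  _ = ε := mul_one ε
        exact absurd hle (not_le.mpr hbound)
      intro i
      have h0 : u i = 0 := by rw [huzero]; rfl
      rw [hu] at h0
      simp only [Int.fract] at h0
      push_cast
      push_cast at h0
      linarith
    -- conclude matrix equality
    ext i j
    have hβne : ((((N₂ : ℤ) - N₁ : ℤ)) : ℝ) ≠ 0 := by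
      push_cast
      intro h
      exact hNne (Nat.cast_injective (by linarith : (N₁ : ℝ) = N₂))
    have hk := key j i
    simp only [Matrix.smul_apply, Matrix.map_apply, smul_eq_mul]
    rw [eq_inv_mul_iff_mul_eq₀ hβne]
    push_cast
    push_cast at hk
    exact key j i
  · rintro ⟨β, X, hβ, hAX⟩
    set T : ℝ := (∑ i, ∑ j, (G₀⁻¹ i j) ^ 2) + 1 with hT
    have hTpos : (0 : ℝ) < T := by positivity
    have hβR : ((β : ℝ)) ≠ 0 := Int.cast_ne_zero.mpr hβ
    refine ⟨((β : ℝ) ^ 2 * T)⁻¹, by positivity, ?_⟩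
    intro c d hw
    set w : Fin k → ℝ := G₀.mulVec (fun i => (c i : ℝ)) + G₁.mulVec (fun i => (d i : ℝ))
      with hwdef
    set u : Fin k → ℝ := (fun i => (c i : ℝ)) + A.mulVec (fun i => (d i : ℝ)) with hu
    have hwu : w = G₀.mulVec u := by
      rw [hu, Matrix.mulVec_add, Matrix.mulVec_mulVec, hinv, hwdef]
    have huw : u = G₀⁻¹.mulVec w := by
      rw [hwu, Matrix.mulVec_mulVec, Matrix.nonsing_inv_mul _ hG₀, Matrix.one_mulVec]
    have huz : u ≠ 0 := by
      intro h
      apply hw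
      rw [hwu, h, Matrix.mulVec_zero]
    -- βu is integral
    have hint : ∀ i, (β : ℝ) * u i = ((β * c i + ∑ j, X i j * d j : ℤ) : ℝ) := by
      intro i
      have hAij : ∀ j, A i j = (β : ℝ)⁻¹ * (X i j : ℝ) := by
        intro j
        rw [hAX]
        simp [Matrix.smul_apply, Matrix.map_apply]
      rw [hu]
      simp only [Pi.add_apply, Matrix.mulVec, dotProduct]
      push_cast
      rw [mul_add, Finset.mul_sum]
      have hterm : ∀ j ∈ Finset.univ, (β : ℝ) * (A i j * (d j : ℝ))
          = (X i j : ℝ) * (d j : ℝ) := by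
        intro j _
        rw [hAij j]
        field_simp
      rw [Finset.sum_congr rfl hterm]
    obtain ⟨i₀, hi₀⟩ := Function.ne_iff.mp huz
    have hz : (β : ℝ) * u i₀ ≠ 0 := mul_ne_zero hβR hi₀
    have hz1 : (1 : ℝ) ≤ ((β : ℝ) * u i₀) ^ 2 := by
      rw [hint i₀] at hz ⊢
      have : (β * c i₀ + ∑ j, X i₀ j * d j : ℤ) ≠ 0 := by
        intro h; apply hz; rw [h]; simp
      have h1 : (1 : ℤ) ≤ (β * c i₀ + ∑ j, X i₀ j * d j) ^ 2 := by
        have := Int.one_le_abs this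
        calc (1 : ℤ) = 1 ^ 2 := by ring
          _ ≤ |β * c i₀ + ∑ j, X i₀ j * d j| ^ 2 := by
              apply pow_le_pow_left₀ (by norm_num) this
          _ = (β * c i₀ + ∑ j, X i₀ j * d j) ^ 2 := sq_abs _
      calc (1 : ℝ) ≤ (((β * c i₀ + ∑ j, X i₀ j * d j : ℤ) : ℝ)) ^ 2 := by
            exact_mod_cast h1
        _ = _ := by push_cast; ring
    -- Cauchy-Schwarz
    have hCS : u i₀ ^ 2 ≤ T * ∑ j, w j ^ 2 := by
      have h1 : u i₀ ^ 2 ≤ (∑ j, (G₀⁻¹ i₀ j) ^ 2) * ∑ j, w j ^ 2 := by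
        have : u i₀ = ∑ j, G₀⁻¹ i₀ j * w j := by
          rw [huw]; simp [Matrix.mulVec, dotProduct]
        rw [this]
        exact Finset.sum_mul_sq_le_sq_mul_sq Finset.univ (fun j => G₀⁻¹ i₀ j) w
      refine h1.trans (mul_le_mul_of_nonneg_right ?_ ?_)
      · rw [hT]
        have : ∑ j, (G₀⁻¹ i₀ j) ^ 2 ≤ ∑ i, ∑ j, (G₀⁻¹ i j) ^ 2 :=
          Finset.single_le_sum (f := fun i => ∑ j, (G₀⁻¹ i j) ^ 2)
            (fun i _ => by positivity) (Finset.mem_univ i₀)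
        linarith
      · positivity
    have hfin : (1 : ℝ) ≤ (β : ℝ) ^ 2 * T * ∑ j, w j ^ 2 := by
      calc (1 : ℝ) ≤ ((β : ℝ) * u i₀) ^ 2 := hz1
        _ = (β : ℝ) ^ 2 * u i₀ ^ 2 := by ring
        _ ≤ (β : ℝ) ^ 2 * (T * ∑ j, w j ^ 2) := by
            apply mul_le_mul_of_nonneg_left hCS (by positivity)
        _ = (β : ℝ) ^ 2 * T * ∑ j, w j ^ 2 := by ring
    rw [inv_le_iff_one_le_mul₀ (by positivity)]
    calc (1:ℝ) ≤ (β : ℝ) ^ 2 * T * ∑ j, w j ^ 2 := hfin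
      _ = _ := by rw [hwdef]; ring
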